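/- Let p ≥ 5 be a prime with p ≡ 2 (mod 3). Let θ ∈ ℚ_p and q ∈ ℕ satisfy |θ−1|_p < |(q:ℚ_p)|_p < 1 and (θ−1)(1−θ−q) ≠ 0. Let y⁽¹⁾ be the unique root in ℚ_p of the cubic y³ − (1+θ+θ²)y² − (2θ+1)(1−θ−q)y − (1−θ−q)² = 0 and set x⁽¹⁾ = 1 − q + (θ−1)(y⁽¹⁾ − 1) and x⁽∞⁾ = 2−θ−q. Then |x⁽¹⁾ − 1|_p = |q|_p and |x⁽¹⁾ − x⁽∞⁾|_p = |θ−1|_p. -/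

import Mathlib

open Polynomial in
/-- for the repelling fixed point `x⁽¹⁾ = 1 - q + (θ-1)(y⁽¹⁾-1)` and
the singular point `x⁽∞⁾ = 2-θ-q`, one has `‖x⁽¹⁾-1‖ = ‖q‖` and
`‖x⁽¹⁾-x⁽∞⁾‖ = ‖θ-1‖`. -/
theorem potts_bethe_repelling_fixed_point_location (p : ℕ) [Fact (Nat.Prime p)]
    (hp5 : 5 ≤ p) (hp3 : p % 3 = 2) (θ : ℚ_[p]) (q : ℕ)
    (hθq : ‖θ - 1‖ < ‖(q : ℚ_[p])‖) (hq : ‖(q : ℚ_[p])‖ < 1)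
    (hne : (θ - 1) * (1 - θ - (q : ℚ_[p])) ≠ 0)
    (y1 : ℚ_[p])
    (hy1 : y1 ^ 3 - (1 + θ + θ ^ 2) * y1 ^ 2 - (2 * θ + 1) * (1 - θ - (q : ℚ_[p])) * y1
        - (1 - θ - (q : ℚ_[p])) ^ 2 = 0)
    (hy1u : ∀ z : ℚ_[p],
      z ^ 3 - (1 + θ + θ ^ 2) * z ^ 2 - (2 * θ + 1) * (1 - θ - (q : ℚ_[p])) * z
        - (1 - θ - (q : ℚ_[p])) ^ 2 = 0 → z = y1) :
    ‖(1 - (q : ℚ_[p]) + (θ - 1) * (y1 - 1)) - 1‖ = ‖(q : ℚ_[p])‖ ∧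
    ‖(1 - (q : ℚ_[p]) + (θ - 1) * (y1 - 1)) - (2 - θ - (q : ℚ_[p]))‖ = ‖θ - 1‖ := by
  have hprime : Nat.Prime p := Fact.out
  have ht1 : ‖θ - 1‖ < 1 := lt_trans hθq hq
  -- b = 1 - θ - q has norm ‖q‖
  have hbQ : ‖1 - θ - (q : ℚ_[p])‖ = ‖(q : ℚ_[p])‖ := by
    have h1 : (1 : ℚ_[p]) - θ - q = (1 - θ) + (-(q : ℚ_[p])) := by ring
    have h2 : ‖(1 : ℚ_[p]) - θ‖ = ‖θ - 1‖ := by rw [← norm_neg]; ring_nf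
    rw [h1, Padic.add_eq_max_of_ne (by rw [h2, norm_neg]; exact ne_of_lt hθq),
      norm_neg, h2, max_eq_right (le_of_lt hθq)]
  have hb1 : ‖1 - θ - (q : ℚ_[p])‖ < 1 := hbQ ▸ hq
  -- padic integer lifts
  set t' : ℤ_[p] := ⟨θ - 1, le_of_lt ht1⟩ with ht'def
  set b' : ℤ_[p] := ⟨1 - θ - (q : ℚ_[p]), le_of_lt hb1⟩ with hb'def
  have ht'c : ((t' : ℤ_[p]) : ℚ_[p]) = θ - 1 := rfl
  have hb'c : ((b' : ℤ_[p]) : ℚ_[p]) = 1 - θ - (q : ℚ_[p]) := rfl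
  have ht'n : ‖t'‖ < 1 := ht1
  have hb'n : ‖b'‖ < 1 := hb1
  -- the cubic over ℤ_[p]
  set F : Polynomial ℤ_[p] :=
    X ^ 3 - C (3 + 3 * t' + t' ^ 2) * X ^ 2 - C ((3 + 2 * t') * b') * X - C (b' ^ 2) with hFdef
  have hevalF : ∀ z : ℤ_[p],
      F.eval z = z ^ 3 - (3 + 3 * t' + t' ^ 2) * z ^ 2 - ((3 + 2 * t') * b') * z - b' ^ 2 := by
    intro z; simp [hFdef]
  have hderivF : ∀ z : ℤ_[p],
      F.derivative.eval z = 3 * z ^ 2 - 2 * (3 + 3 * t' + t' ^ 2) * z - (3 + 2 * t') * b' := by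
    intro z
    have : F.derivative = C 3 * X ^ 2 - C (2 * (3 + 3 * t' + t' ^ 2)) * X
        - C ((3 + 2 * t') * b') := by
      simp [hFdef, Polynomial.derivative_pow]; ring
    rw [this]; simp
  have hnorm3 : ‖(3 : ℤ_[p])‖ = 1 := by
    refine le_antisymm (PadicInt.norm_le_one _) ?_
    by_contra h
    have h3 : ‖((3 : ℤ) : ℤ_[p])‖ < 1 := by push_cast; linarith [lt_of_not_ge h]
    have := (PadicInt.norm_int_lt_one_iff_dvd 3).1 h3
    have hd : p ∣ 3 := by exact_mod_cast this
    have := Nat.le_of_dvd (by norm_num) hd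
    omega
  have hnorm9 : ‖(9 : ℤ_[p])‖ = 1 := by
    have : (9 : ℤ_[p]) = 3 * 3 := by norm_num
    rw [this, norm_mul, hnorm3]; norm_num
  -- small elements
  have hmax : max ‖t'‖ ‖b'‖ < 1 := max_lt ht'n hb'n
  have hsmall : ∀ u v : ℤ_[p], ‖t' * u + b' * v‖ < 1 := by
    intro u v
    refine lt_of_le_of_lt (PadicInt.nonarchimedean _ _) (max_lt ?_ ?_)
    · calc ‖t' * u‖ = ‖t'‖ * ‖u‖ := norm_mul _ _
        _ ≤ ‖t'‖ * 1 := mul_le_mul_of_nonneg_left (PadicInt.norm_le_one _) (norm_nonneg _)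
        _ < 1 := by rw [mul_one]; exact ht'n
    · calc ‖b' * v‖ = ‖b'‖ * ‖v‖ := norm_mul _ _
        _ ≤ ‖b'‖ * 1 := mul_le_mul_of_nonneg_left (PadicInt.norm_le_one _) (norm_nonneg _)
        _ < 1 := by rw [mul_one]; exact hb'n
  -- Hensel hypothesis at a = 3
  have heval3 : ‖F.eval 3‖ < 1 := by
    have h1 : F.eval 3 = t' * (-27 - 9 * t' - 6 * b') + b' * (-9 - b') := by
      rw [hevalF]; ring
    rw [h1]; exact hsmall _ _
  have hderiv3 : ‖F.derivative.eval 3‖ = 1 := by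
    have h1 : F.derivative.eval 3 = 9 + (t' * (-18 - 6 * t' - 2 * b') + b' * (-3)) := by
      rw [hderivF]; ring
    rw [h1, PadicInt.norm_add_eq_max_of_ne (by rw [hnorm9]; exact ne_of_gt (hsmall _ _)),
      hnorm9, max_eq_left (le_of_lt (hsmall _ _))]
  obtain ⟨z, hzroot, hzclose, -, -⟩ :=
    hensels_lemma (p := p) (F := F) (a := (3 : ℤ_[p])) (by simp only [Polynomial.coe_aeval_eq_eval]; rw [hderiv3]; simpa using heval3)
  simp only [Polynomial.coe_aeval_eq_eval] at hzroot hzclose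
  rw [hderiv3] at hzclose
  -- z has norm 1
  have hzn : ‖z‖ = 1 := by
    have h1 : z = (z - 3) + 3 := by ring
    rw [h1, PadicInt.norm_add_eq_max_of_ne (by rw [hnorm3]; exact ne_of_lt hzclose),
      hnorm3, max_eq_right (le_of_lt hzclose)]
  -- coerce the root equation to ℚ_p
  have hzQ : ((z : ℤ_[p]) : ℚ_[p]) ^ 3 - (1 + θ + θ ^ 2) * (z : ℚ_[p]) ^ 2
      - (2 * θ + 1) * (1 - θ - (q : ℚ_[p])) * (z : ℚ_[p])
      - (1 - θ - (q : ℚ_[p])) ^ 2 = 0 := by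
    have h0 : ((F.eval z : ℤ_[p]) : ℚ_[p]) = 0 := by rw [hzroot]; simp
    rw [hevalF] at h0
    push_cast at h0
    have h3 : ((3 : ℤ_[p]) : ℚ_[p]) = 3 := by norm_cast
    have h2 : ((2 : ℤ_[p]) : ℚ_[p]) = 2 := by norm_cast
    rw [h3, h2] at h0
    linear_combination h0
  have hyz : y1 = (z : ℚ_[p]) := (hy1u _ hzQ).symm
  have hy1n : ‖y1‖ = 1 := by rw [hyz, PadicInt.padic_norm_e_of_padicInt, hzn]
  have hy1m : ‖y1 - 1‖ ≤ 1 := by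
    rw [hyz]
    have : ((z : ℤ_[p]) : ℚ_[p]) - 1 = ((z - 1 : ℤ_[p]) : ℚ_[p]) := by push_cast; ring
    rw [this, PadicInt.padic_norm_e_of_padicInt]
    exact PadicInt.norm_le_one _
  have hsm : ‖(θ - 1) * (y1 - 1)‖ < ‖(q : ℚ_[p])‖ := by
    rw [norm_mul]
    calc ‖θ - 1‖ * ‖y1 - 1‖ ≤ ‖θ - 1‖ * 1 :=
          mul_le_mul_of_nonneg_left hy1m (norm_nonneg _)
      _ < ‖(q : ℚ_[p])‖ := by rw [mul_one]; exact hθq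
  constructor
  · have h1 : (1 - (q : ℚ_[p]) + (θ - 1) * (y1 - 1)) - 1
        = (-(q : ℚ_[p])) + (θ - 1) * (y1 - 1) := by ring
    rw [h1, Padic.add_eq_max_of_ne (by rw [norm_neg]; exact ne_of_gt hsm), norm_neg,
      max_eq_left (le_of_lt hsm)]
  · have h2 : (1 - (q : ℚ_[p]) + (θ - 1) * (y1 - 1)) - (2 - θ - (q : ℚ_[p]))
        = (θ - 1) * y1 := by ring
    rw [h2, norm_mul, hy1n, mul_one]
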